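/- Perturbation inequality in the proof of Lemma 1: in the perturbed-problem setup, suppose (x⁰, y⁰, u⁰) is 0-feasible with cost equal to ψ(0), x⁰ h' > 0 and y⁰ h' > 0. Then for every ε with 0 < ε < min (x⁰ h') (y⁰ h'), one has ψ(ε) ≤ ψ(0) - ((α h' * b h' + β h' * a h') / (a h' + b h')) * ε. -/

import Mathlib

open Finset

/-- A triple `(x, y, u)` is `ε`-feasible for the perturbed problem. -/
def PertFeasible (H m : ℕ) (h' : Fin H) (g : Fin H → (Fin m → ℝ) → ℝ)
    (Cu : Set (Fin H → Fin m → ℝ)) (Cy : Set (Fin H → ℝ)) (ε : ℝ)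
    (x y : Fin H → ℝ) (u : Fin H → Fin m → ℝ) : Prop :=
  u ∈ Cu ∧ y ∈ Cy ∧ (∀ h, h ≠ h' → g h (u h) ≤ x h + y h) ∧
    g h' (u h') ≤ x h' + y h' + ε ∧ (∀ h, 0 ≤ x h) ∧ (∀ h, 0 ≤ y h)

/-- The cost of a triple `(x, y, u)`. -/
def PertCost (H m : ℕ) (α β a b : Fin H → ℝ)
    (f : (Fin H → Fin m → ℝ) → ℝ) (K : ℝ → ℝ)
    (x y : Fin H → ℝ) (u : Fin H → Fin m → ℝ) : ℝ :=
  (∑ h, (α h * x h + β h * y h)) + f u + K (∑ h, (a h * x h - b h * y h))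

/-- The optimal value `ψ(ε)` of the perturbed problem. -/
noncomputable def psi (H m : ℕ) (h' : Fin H) (α β a b : Fin H → ℝ)
    (g : Fin H → (Fin m → ℝ) → ℝ) (Cu : Set (Fin H → Fin m → ℝ))
    (Cy : Set (Fin H → ℝ)) (f : (Fin H → Fin m → ℝ) → ℝ) (K : ℝ → ℝ)
    (ε : ℝ) : ℝ :=
  sInf {c : ℝ | ∃ x y : Fin H → ℝ, ∃ u : Fin H → Fin m → ℝ,
    PertFeasible H m h' g Cu Cy ε x y u ∧ c = PertCost H m α β a b f K x y u}

lemma sum_shift {H : ℕ} (h' : Fin H) (w x0 : Fin H → ℝ) (d : ℝ) :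
    ∑ h, w h * (x0 h - if h = h' then d else 0)
      = (∑ h, w h * x0 h) - w h' * d := by
  simp [mul_sub, Finset.sum_sub_distrib, mul_ite, mul_zero]

/-- Perturbation inequality in the proof of Lemma 1. -/
theorem perturbation_inequality
    (H m : ℕ) (hH : 1 ≤ H) (h' : Fin H)
    (α β a b : Fin H → ℝ)
    (hα : ∀ h, 0 < α h) (hβ : ∀ h, 0 < β h)
    (ha : ∀ h, 0 < a h) (hb : ∀ h, 0 < b h)
    (Cu : Set (Fin H → Fin m → ℝ)) (hCu : Convex ℝ Cu)
    (Cy : Set (Fin H → ℝ)) (hCy : Convex ℝ Cy)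
    (hCydown : ∀ y ∈ Cy, ∀ y' : Fin H → ℝ, (∀ h, y' h ≤ y h) → y' ∈ Cy)
    (f : (Fin H → Fin m → ℝ) → ℝ) (hf : ConvexOn ℝ Set.univ f)
    (g : Fin H → (Fin m → ℝ) → ℝ) (hg : ∀ h, ConvexOn ℝ Set.univ (g h))
    (K : ℝ → ℝ) (hK : ConvexOn ℝ Set.univ K)
    (hbdd : ∀ ε : ℝ, 0 ≤ ε → BddBelow
      {c : ℝ | ∃ x y : Fin H → ℝ, ∃ u : Fin H → Fin m → ℝ,
        PertFeasible H m h' g Cu Cy ε x y u ∧ c = PertCost H m α β a b f K x y u})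
    (x0 y0 : Fin H → ℝ) (u0 : Fin H → Fin m → ℝ)
    (hfeas0 : PertFeasible H m h' g Cu Cy 0 x0 y0 u0)
    (hopt : PertCost H m α β a b f K x0 y0 u0 = psi H m h' α β a b g Cu Cy f K 0)
    (hx0 : 0 < x0 h') (hy0 : 0 < y0 h') :
    ∀ ε : ℝ, 0 < ε → ε < min (x0 h') (y0 h') →
      psi H m h' α β a b g Cu Cy f K ε ≤
        psi H m h' α β a b g Cu Cy f K 0 -
          ((α h' * b h' + β h' * a h') / (a h' + b h')) * ε := by
  intro ε hε hεmin
  obtain ⟨hu, hy, hgh, hgh', hxnn, hynn⟩ := hfeas0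
  have hab : 0 < a h' + b h' := add_pos (ha h') (hb h')
  set c : ℝ := ε / (a h' + b h') with hc
  have hcpos : 0 < c := div_pos hε hab
  set δx : ℝ := b h' * c with hδx
  set δy : ℝ := a h' * c with hδy
  have hδxpos : 0 < δx := mul_pos (hb h') hcpos
  have hδypos : 0 < δy := mul_pos (ha h') hcpos
  have hsum : δx + δy = ε := by
    simp only [hδx, hδy, hc]
    field_simp
    ring
  have hδxlt : δx < ε := by
    have : δy > 0 := hδypos
    linarith
  have hδylt : δy < ε := by linarith [hδxpos, hsum]
  have hεx : ε < x0 h' := lt_of_lt_of_le hεmin (min_le_left _ _)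
  have hεy : ε < y0 h' := lt_of_lt_of_le hεmin (min_le_right _ _)
  set x1 : Fin H → ℝ := fun h => x0 h - if h = h' then δx else 0 with hx1
  set y1 : Fin H → ℝ := fun h => y0 h - if h = h' then δy else 0 with hy1
  have hfeas : PertFeasible H m h' g Cu Cy ε x1 y1 u0 := by
    refine ⟨hu, ?_, ?_, ?_, ?_, ?_⟩
    · refine hCydown y0 hy y1 fun h => ?_
      simp only [hy1]
      split <;> [linarith; linarith]
    · intro h hne
      simp only [hx1, hy1, if_neg hne]
      simpa using hgh h hne
    · have := hgh'
      simp only [hx1, hy1, if_pos rfl, if_true]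
      linarith
    · intro h
      simp only [hx1]
      split
      · next heq => subst heq; linarith
      · simpa using hxnn h
    · intro h
      simp only [hy1]
      split
      · next heq => subst heq; linarith
      · simpa using hynn h
  have hcost : PertCost H m α β a b f K x1 y1 u0
      = PertCost H m α β a b f K x0 y0 u0
        - ((α h' * b h' + β h' * a h') / (a h' + b h')) * ε := by
    have e1 : ∑ h, (α h * x1 h + β h * y1 h)
        = (∑ h, (α h * x0 h + β h * y0 h)) - (α h' * δx + β h' * δy) := by
      simp only [Finset.sum_add_distrib, hx1, hy1,
        sum_shift h' α x0 δx, sum_shift h' β y0 δy]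
      ring
    have e2 : ∑ h, (a h * x1 h - b h * y1 h)
        = ∑ h, (a h * x0 h - b h * y0 h) := by
      simp only [Finset.sum_sub_distrib, hx1, hy1,
        sum_shift h' a x0 δx, sum_shift h' b y0 δy]
      have : a h' * δx = b h' * δy := by
        simp only [hδx, hδy]; ring
      linarith
    have e3 : α h' * δx + β h' * δy
        = ((α h' * b h' + β h' * a h') / (a h' + b h')) * ε := by
      simp only [hδx, hδy, hc]
      field_simp
    simp only [PertCost, e1, e2, e3]
    ring
  have hmem : PertCost H m α β a b f K x1 y1 u0 ∈
      {c : ℝ | ∃ x y : Fin H → ℝ, ∃ u : Fin H → Fin m → ℝ,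
        PertFeasible H m h' g Cu Cy ε x y u ∧ c = PertCost H m α β a b f K x y u} :=
    ⟨x1, y1, u0, hfeas, rfl⟩
  calc psi H m h' α β a b g Cu Cy f K ε ≤ PertCost H m α β a b f K x1 y1 u0 :=
        csInf_le (hbdd ε hε.le) hmem
    _ = _ := by rw [hcost, hopt]
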